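/- Let p ≥ 3 and let C_p be the cycle graph on p vertices. Then for every integer i with 1 ≤ i ≤ p−2: Σ_{W ⊆ V(C_p), |W| = i+1} (c(W) − 1) = i·C(p−2, i+1) + (p−2−i)·C(p−2, p−1−i), where c(W) denotes the number of connected components of the subgraph of C_p induced on W. -/

import Mathlib

/-- `numComp G W`: the number of connected components of the subgraph of `G` induced
on the vertex set `W`. -/
noncomputable def numComp {V : Type*} (G : SimpleGraph V) (W : Finset V) : ℕ :=
  Nat.card (SimpleGraph.ConnectedComponent (G.induce (W : Set V)))

open Finset SimpleGraph
open Fin.NatCast Fin.CommRing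

variable {n : ℕ}

lemma exists_out {W : Finset (Fin (n+2))} (hW : W ≠ Finset.univ) (v : Fin (n+2)) :
    ∃ k : ℕ, (v + ((k+1 : ℕ) : Fin (n+2))) ∉ W := by
  obtain ⟨b, hb⟩ : ∃ b, b ∉ W := by
    by_contra h; push_neg at h; exact hW (Finset.eq_univ_iff_forall.mpr h)
  rcases Nat.eq_zero_or_pos (b - v).val with h0 | h0
  · refine ⟨n + 1, ?_⟩
    have h2 : b - v = 0 := by
      have := Fin.cast_val_eq_self (b - v)
      rw [h0] at this
      simpa using this.symm
    have hbv : b = v := by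
      have := sub_eq_zero.mp h2; exact this
    have hc : ((n + 1 + 1 : ℕ) : Fin (n+2)) = 0 := by
      simp [Fin.ext_iff, Nat.mod_self]
    rw [hc, add_zero, ← hbv]; exact hb
  · refine ⟨(b - v).val - 1, ?_⟩
    have h1 : ((b - v).val - 1 + 1) = (b - v).val := by omega
    rw [h1, Fin.cast_val_eq_self]
    simpa using hb

noncomputable def dd {W : Finset (Fin (n+2))} (hW : W ≠ Finset.univ) (v : Fin (n+2)) : ℕ :=
  Nat.find (exists_out hW v)

lemma dd_spec {W : Finset (Fin (n+2))} (hW : W ≠ Finset.univ) (v : Fin (n+2)) :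
    (v + ((dd hW v + 1 : ℕ) : Fin (n+2))) ∉ W := Nat.find_spec (exists_out hW v)

lemma dd_min {W : Finset (Fin (n+2))} (hW : W ≠ Finset.univ) (v : Fin (n+2)) {k : ℕ}
    (hk : k < dd hW v) : (v + ((k+1 : ℕ) : Fin (n+2))) ∈ W := by
  have := Nat.find_min (exists_out hW v) hk
  simpa using this

lemma mem_of_le_dd {W : Finset (Fin (n+2))} (hW : W ≠ Finset.univ) {v : Fin (n+2)}
    (hv : v ∈ W) {j : ℕ} (hj : j ≤ dd hW v) : (v + ((j : ℕ) : Fin (n+2))) ∈ W := by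
  cases j with
  | zero => simpa using hv
  | succ k => exact dd_min hW v (by omega)

lemma dd_shift {W : Finset (Fin (n+2))} (hW : W ≠ Finset.univ) {v : Fin (n+2)}
    (hv1 : v + 1 ∈ W) : dd hW (v + 1) + 1 = dd hW v := by
  have h0 : 0 < dd hW v := by
    rcases Nat.eq_zero_or_pos (dd hW v) with h | h
    · exfalso
      have := dd_spec hW v
      rw [h] at this
      apply this
      simpa using hv1
    · exact h
  have key : dd hW (v + 1) = dd hW v - 1 := by
    rw [dd, Nat.find_eq_iff]
    constructor
    · have h1 : (dd hW v - 1 + 1) = dd hW v := by omega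
      rw [h1]
      have : v + 1 + ((dd hW v : ℕ) : Fin (n+2)) = v + ((dd hW v + 1 : ℕ) : Fin (n+2)) := by
        push_cast; ring
      rw [this]
      exact dd_spec hW v
    · intro k hk hknot
      apply hknot
      have : v + 1 + ((k + 1 : ℕ) : Fin (n+2)) = v + ((k + 1 + 1 : ℕ) : Fin (n+2)) := by
        push_cast; ring
      rw [this]
      exact dd_min hW v (by omega)
  omega

lemma comp_eq_of_le {W : Finset (Fin (n+2))} (hW : W ≠ Finset.univ) {v : Fin (n+2)}
    (hv : v ∈ W) (j : ℕ) (hj : j ≤ dd hW v) :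
    ((cycleGraph (n+2)).induce (W : Set (Fin (n+2)))).connectedComponentMk
        ⟨v, by simpa using hv⟩
      = ((cycleGraph (n+2)).induce (W : Set (Fin (n+2)))).connectedComponentMk
        ⟨v + ((j : ℕ) : Fin (n+2)), by simpa using mem_of_le_dd hW hv hj⟩ := by
  induction j with
  | zero =>
      congr 1
      exact Subtype.ext (by simp)
  | succ k ih =>
      have hk : k ≤ dd hW v := by omega
      rw [ih hk]
      apply ConnectedComponent.connectedComponentMk_eq_of_adj
      simp only [comap_adj, Function.Embedding.coe_subtype]
      rw [cycleGraph_adj]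
      right
      push_cast
      ring

lemma e_adj {W : Finset (Fin (n+2))} (hW : W ≠ Finset.univ) {u w : Fin (n+2)}
    (hu : u ∈ W) (hw : w ∈ W) (hadj : (cycleGraph (n+2)).Adj u w) :
    u + ((dd hW u : ℕ) : Fin (n+2)) = w + ((dd hW w : ℕ) : Fin (n+2)) := by
  have key : ∀ x : Fin (n+2), x ∈ W → x + 1 ∈ W →
      x + ((dd hW x : ℕ) : Fin (n+2)) = (x+1) + ((dd hW (x+1) : ℕ) : Fin (n+2)) := by
    intro x hx hx1
    have h := dd_shift hW hx1
    have : ((dd hW x : ℕ) : Fin (n+2)) = ((dd hW (x+1) + 1 : ℕ) : Fin (n+2)) := by rw [h]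
    rw [this]
    push_cast
    ring
  rw [cycleGraph_adj] at hadj
  rcases hadj with h | h
  · have : u = w + 1 := by
      rw [sub_eq_iff_eq_add] at h; rw [h]; ring
    subst this
    exact (key w hw hu).symm
  · have : w = u + 1 := by
      rw [sub_eq_iff_eq_add] at h; rw [h]; ring
    subst this
    exact key u hu hw

noncomputable def EE {W : Finset (Fin (n+2))} (hW : W ≠ Finset.univ) :
    ((cycleGraph (n+2)).induce (W : Set (Fin (n+2)))).ConnectedComponent → Fin (n+2) :=
  ConnectedComponent.lift (fun x => x.1 + ((dd hW x.1 : ℕ) : Fin (n+2)))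
    (by
      suffices h : ∀ (v w : (W : Set (Fin (n+2))))
          (p : ((cycleGraph (n+2)).induce (W : Set (Fin (n+2)))).Walk v w),
          v.1 + ((dd hW v.1 : ℕ) : Fin (n+2)) = w.1 + ((dd hW w.1 : ℕ) : Fin (n+2)) by
        intro v w p _
        exact h v w p
      intro v w p
      induction p with
      | nil => rfl
      | @cons a b c hadj q ih =>
          have h1 : (cycleGraph (n+2)).Adj a.1 b.1 := hadj
          exact (e_adj hW (by simpa using a.2) (by simpa using b.2) h1).trans ih)

@[simp] lemma EE_mk {W : Finset (Fin (n+2))} (hW : W ≠ Finset.univ)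
    (x : (W : Set (Fin (n+2)))) :
    EE hW (((cycleGraph (n+2)).induce (W : Set (Fin (n+2)))).connectedComponentMk x)
      = x.1 + ((dd hW x.1 : ℕ) : Fin (n+2)) := rfl

lemma numComp_cycle {W : Finset (Fin (n+2))} (hW : W ≠ Finset.univ) :
    numComp (cycleGraph (n+2)) W = (W.filter (fun v => v + 1 ∉ W)).card := by
  classical
  have hEmem : ∀ c, EE hW c ∈ W.filter (fun v => v + 1 ∉ W) := by
    refine ConnectedComponent.ind ?_
    intro x
    rw [EE_mk]
    rw [Finset.mem_filter]
    constructor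
    · exact mem_of_le_dd hW (by simpa using x.2) le_rfl
    · have := dd_spec hW x.1
      intro hmem
      apply this
      have : x.1 + ((dd hW x.1 + 1 : ℕ) : Fin (n+2))
          = x.1 + ((dd hW x.1 : ℕ) : Fin (n+2)) + 1 := by push_cast; ring
      rw [this]
      exact hmem
  let Φ : ((cycleGraph (n+2)).induce (W : Set (Fin (n+2)))).ConnectedComponent ≃
      {v // v ∈ W.filter (fun v => v + 1 ∉ W)} :=
    { toFun := fun c => ⟨EE hW c, hEmem c⟩
      invFun := fun b => ((cycleGraph (n+2)).induce (W : Set (Fin (n+2)))).connectedComponentMk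
        ⟨b.1, by simpa using (Finset.mem_filter.mp b.2).1⟩
      left_inv := by
        refine ConnectedComponent.ind ?_
        intro x
        simp only [EE_mk]
        exact (comp_eq_of_le hW (by simpa using x.2) (dd hW x.1) le_rfl).symm
      right_inv := by
        intro b
        obtain ⟨hb1, hb2⟩ := Finset.mem_filter.mp b.2
        ext
        simp only [EE_mk]
        have hd0 : dd hW b.1 = 0 := by
          rw [dd, Nat.find_eq_zero]
          simpa using hb2
        rw [hd0]
        simp }
  rw [numComp, Nat.card_congr Φ, Nat.card_eq_fintype_card]
  exact Fintype.card_coe _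

lemma count_v (i : ℕ) (v : Fin (n+2)) :
    (((Finset.univ : Finset (Fin (n+2))).powersetCard (i+1)).filter
        (fun W => v ∈ W ∧ v + 1 ∉ W)).card = Nat.choose n i := by
  classical
  have hvne : v + 1 ≠ v := by
    intro h
    have h1 : v + 1 = v + 0 := by simpa using h
    have h2 := add_left_cancel h1
    rw [Fin.one_eq_zero_iff] at h2
    omega
  rw [Finset.card_bij' (i := fun W _ => W.erase v)
    (j := fun S _ => insert v S)
    (hi := ?_) (hj := ?_) (left_inv := ?_) (right_inv := ?_)
    (t := (({v, v+1}ᶜ : Finset (Fin (n+2))).powersetCard i))]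
  · rw [Finset.card_powersetCard, Finset.card_compl, Finset.card_pair (Ne.symm hvne)]
    simp
  · intro W hW
    simp only [Finset.mem_filter, Finset.mem_powersetCard] at hW
    obtain ⟨⟨_, hcard⟩, hv, hv1⟩ := hW
    rw [Finset.mem_powersetCard]
    constructor
    · intro x hx
      simp only [Finset.mem_erase] at hx
      simp only [Finset.mem_compl, Finset.mem_insert, Finset.mem_singleton]
      push_neg
      exact ⟨hx.1, fun h => hv1 (h ▸ hx.2)⟩
    · rw [Finset.card_erase_of_mem hv, hcard]
      omega
  · intro S hS
    rw [Finset.mem_powersetCard] at hS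
    obtain ⟨hsub, hcard⟩ := hS
    have hvS : v ∉ S := by
      intro h
      have := hsub h
      simp at this
    simp only [Finset.mem_filter, Finset.mem_powersetCard]
    refine ⟨⟨Finset.subset_univ _, ?_⟩, Finset.mem_insert_self _ _, ?_⟩
    · rw [Finset.card_insert_of_notMem hvS, hcard]
    · simp only [Finset.mem_insert]
      push_neg
      refine ⟨hvne, fun h => ?_⟩
      have := hsub h
      simp at this
  · intro W hW
    simp only [Finset.mem_filter] at hW
    exact Finset.insert_erase hW.2.1
  · intro S hS
    rw [Finset.mem_powersetCard] at hS
    have hvS : v ∉ S := by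
      intro h
      have := hS.1 h
      simp at this
    exact Finset.erase_insert hvS

lemma count_sum (i : ℕ) :
    ∑ W ∈ (Finset.univ : Finset (Fin (n+2))).powersetCard (i+1),
        (W.filter (fun v => v + 1 ∉ W)).card
      = (n + 2) * Nat.choose n i := by
  classical
  have h1 : ∀ W : Finset (Fin (n+2)), (W.filter (fun v => v + 1 ∉ W)).card
      = ∑ v : Fin (n+2), if v ∈ W ∧ v + 1 ∉ W then 1 else 0 := by
    intro W
    rw [← Finset.card_filter]
    congr 1
    ext x
    simp only [Finset.mem_filter, Finset.mem_univ, true_and]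
  calc ∑ W ∈ (Finset.univ : Finset (Fin (n+2))).powersetCard (i+1),
        (W.filter (fun v => v + 1 ∉ W)).card
      = ∑ W ∈ (Finset.univ : Finset (Fin (n+2))).powersetCard (i+1),
          ∑ v : Fin (n+2), if v ∈ W ∧ v + 1 ∉ W then 1 else 0 := by
        exact Finset.sum_congr rfl (fun W _ => h1 W)
    _ = ∑ v : Fin (n+2), ∑ W ∈ (Finset.univ : Finset (Fin (n+2))).powersetCard (i+1),
          if v ∈ W ∧ v + 1 ∉ W then 1 else 0 := Finset.sum_comm
    _ = ∑ v : Fin (n+2), (((Finset.univ : Finset (Fin (n+2))).powersetCard (i+1)).filter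
          (fun W => v ∈ W ∧ v + 1 ∉ W)).card := by
        refine Finset.sum_congr rfl (fun v _ => ?_)
        rw [Finset.card_filter]
    _ = ∑ _v : Fin (n+2), Nat.choose n i := by
        exact Finset.sum_congr rfl (fun v _ => count_v i v)
    _ = (n + 2) * Nat.choose n i := by
        rw [Finset.sum_const, Finset.card_univ, Fintype.card_fin, smul_eq_mul]

lemma binom_id (m i : ℕ) (hi1 : 1 ≤ i) (hi2 : i ≤ m) :
    (m + 2) * Nat.choose m i
      = Nat.choose (m+2) (i+1) + (i * Nat.choose m (i+1) + (m - i) * Nat.choose m (i-1)) := by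
  obtain ⟨j, rfl⟩ : ∃ j, i = j + 1 := ⟨i - 1, by omega⟩
  obtain ⟨k, rfl⟩ : ∃ k, m = j + 1 + k := ⟨m - (j+1), by omega⟩
  set mm := j + 1 + k with hm
  have f1 : Nat.choose mm (j+1+1) * (j+1+1) = Nat.choose mm (j+1) * (mm - (j+1)) :=
    Nat.choose_succ_right_eq mm (j+1)
  have f2 : Nat.choose mm (j+1) * (j+1) = Nat.choose mm j * (mm - j) :=
    Nat.choose_succ_right_eq mm j
  have hsub1 : mm - (j+1) = k := by omega
  have hsub2 : mm - j = k + 1 := by omega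
  rw [hsub1] at f1
  rw [hsub2] at f2
  have hp1 : Nat.choose (mm+2) (j+2) = Nat.choose mm j + 2 * Nat.choose mm (j+1)
      + Nat.choose mm (j+2) := by
    rw [Nat.choose_succ_succ (mm+1) (j+1), Nat.choose_succ_succ mm j,
        Nat.choose_succ_succ mm (j+1)]
    ring
  have hgoal : (mm + 2) * Nat.choose mm (j+1)
      = Nat.choose (mm+2) (j+1+1)
        + ((j+1) * Nat.choose mm (j+1+1) + (mm - (j+1)) * Nat.choose mm (j+1-1)) := by
    rw [hsub1]
    have hj1 : j + 1 - 1 = j := by omega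
    rw [hj1, hp1]
    zify at f1 f2 ⊢
    have hmz : (mm : ℤ) = (j : ℤ) + 1 + k := by rw [hm]; push_cast; ring
    linear_combination -f1 + f2 + (mm.choose (j+1) : ℤ) * hmz
  exact hgoal

/-- Proposition 3.6 (combinatorial content, via Hochster's formula): for the cycle
graph `C_p` on `p ≥ 3` vertices and `1 ≤ i ≤ p−2`,
`Σ_{|W| = i+1} (c(W) − 1) = i·C(p−2, i+1) + (p−2−i)·C(p−2, p−1−i)`. -/
theorem cycle_graph_betti (p : ℕ) (hp : 3 ≤ p) (i : ℕ) (hi1 : 1 ≤ i) (hi2 : i ≤ p - 2) :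
    ∑ W ∈ (Finset.univ : Finset (Fin p)).powersetCard (i + 1),
        (numComp (SimpleGraph.cycleGraph p) W - 1)
      = i * Nat.choose (p - 2) (i + 1) + (p - 2 - i) * Nat.choose (p - 2) (p - 1 - i) := by
  classical
  obtain ⟨n, rfl⟩ : ∃ n, p = n + 2 := ⟨p - 2, by omega⟩
  have h2 : (n + 2 : ℕ) - 2 = n := by omega
  rw [h2] at hi2 ⊢
  have h3 : n + 2 - 1 - i = n + 1 - i := by omega
  rw [h3]
  have hne : ∀ W ∈ (Finset.univ : Finset (Fin (n+2))).powersetCard (i+1),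
      W ≠ Finset.univ := by
    intro W hW hcon
    rw [Finset.mem_powersetCard] at hW
    rw [hcon] at hW
    have := hW.2
    rw [Finset.card_univ, Fintype.card_fin] at this
    omega
  have hone : ∀ W ∈ (Finset.univ : Finset (Fin (n+2))).powersetCard (i+1),
      1 ≤ numComp (cycleGraph (n+2)) W := by
    intro W hW
    rw [Finset.mem_powersetCard] at hW
    have hWne : W.Nonempty := Finset.card_pos.mp (by omega)
    obtain ⟨x, hx⟩ := hWne
    have hnonempty : Nonempty
        ((cycleGraph (n+2)).induce (W : Set (Fin (n+2)))).ConnectedComponent :=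
      ⟨((cycleGraph (n+2)).induce (W : Set (Fin (n+2)))).connectedComponentMk
        ⟨x, by simpa using hx⟩⟩
    have hfin : Finite
        ((cycleGraph (n+2)).induce (W : Set (Fin (n+2)))).ConnectedComponent :=
      Finite.of_surjective _ (Quot.mk_surjective)
    exact Nat.one_le_iff_ne_zero.mpr (Nat.card_pos).ne'
  rw [Finset.sum_tsub_distrib _ hone]
  have hA : ∑ W ∈ (Finset.univ : Finset (Fin (n+2))).powersetCard (i+1),
      numComp (cycleGraph (n+2)) W = (n + 2) * Nat.choose n i := by
    rw [Finset.sum_congr rfl (fun W hW => numComp_cycle (hne W hW))]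
    exact count_sum i
  rw [hA, Finset.sum_const, Finset.card_powersetCard, Finset.card_univ, Fintype.card_fin,
    smul_eq_mul, mul_one]
  have hsym : Nat.choose n (n + 1 - i) = Nat.choose n (i - 1) := by
    have h : n + 1 - i = n - (i - 1) := by omega
    rw [h, Nat.choose_symm (by omega)]
  rw [hsym, binom_id n i hi1 hi2]
  exact Nat.add_sub_cancel_left _ _
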